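/- If f : X → Y is a surjective open continuous map between compact Hausdorff spaces, then the induced map exp(f) : exp(X) → exp(Y), A ↦ f(A), between hyperspaces with the Vietoris topology, is open. -/

import Mathlib

/-- The hyperspace of nonempty compact subsets of `X`. -/
abbrev Hyper (X : Type*) [TopologicalSpace X] : Type _ :=
  {A : Set X // A.Nonempty ∧ IsCompact A}

/-- The Vietoris topology on `Hyper X`. -/
def vietoris (X : Type*) [TopologicalSpace X] : TopologicalSpace (Hyper X) :=
  TopologicalSpace.generateFrom
    ({S | ∃ U : Set X, IsOpen U ∧ S = {A : Hyper X | (A : Set X) ⊆ U}} ∪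
     {S | ∃ U : Set X, IsOpen U ∧ S = {A : Hyper X | ((A : Set X) ∩ U).Nonempty}})

/-- Key lemma: for an open continuous map out of a compact Hausdorff space,
any compact `B ⊆ f '' U` with `U` open is the image of a compact `K ⊆ U`. -/
lemma exists_compact_image_eq {X Y : Type*} [TopologicalSpace X] [CompactSpace X]
    [T2Space X] [TopologicalSpace Y] [T2Space Y]
    (f : X → Y) (hf : Continuous f) (hopen : IsOpenMap f)
    {U : Set X} (hU : IsOpen U) {B : Set Y} (hB : IsCompact B) (hBU : B ⊆ f '' U) :
    ∃ K : Set X, IsCompact K ∧ K ⊆ U ∧ f '' K = B := by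
  -- for each point of U choose a compact neighborhood inside U
  have hK : ∀ x : U, ∃ K : Set X, IsCompact K ∧ (x : X) ∈ interior K ∧ K ⊆ U :=
    fun x => exists_compact_subset hU x.2
  choose K hKc hKi hKU using hK
  -- the open sets f '' interior (K x) cover B
  have hcover : B ⊆ ⋃ x : U, f '' interior (K x) := by
    intro b hb
    obtain ⟨x, hxU, rfl⟩ := hBU hb
    exact Set.mem_iUnion.mpr ⟨⟨x, hxU⟩, Set.mem_image_of_mem f (hKi ⟨x, hxU⟩)⟩
  obtain ⟨t, ht⟩ := hB.elim_finite_subcover (fun x : U => f '' interior (K x))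
    (fun x => hopen _ isOpen_interior) hcover
  set Kt : Set X := ⋃ x ∈ t, K x with hKt
  have hKtc : IsCompact Kt := t.finite_toSet.isCompact_biUnion (fun x _ => hKc x)
  have hKtU : Kt ⊆ U := Set.iUnion₂_subset fun x _ => hKU x
  refine ⟨Kt ∩ f ⁻¹' B, hKtc.inter_right (hB.isClosed.preimage hf), fun x hx => hKtU hx.1, ?_⟩
  apply subset_antisymm
  · rintro y ⟨x, ⟨_, hxB⟩, rfl⟩; exact hxB
  · intro b hb
    obtain ⟨x, hxt, hximg⟩ := Set.mem_iUnion₂.mp (ht hb)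
    obtain ⟨z, hz, rfl⟩ := hximg
    exact ⟨z, ⟨Set.mem_biUnion hxt (interior_subset hz), hb⟩, rfl⟩

/-- Subbasic "upper" sets are Vietoris-open. -/
lemma up_isOpen {X : Type*} [TopologicalSpace X] {U : Set X} (hU : IsOpen U) :
    @IsOpen (Hyper X) (vietoris X) {A : Hyper X | (A : Set X) ⊆ U} :=
  TopologicalSpace.GenerateOpen.basic _ (Or.inl ⟨U, hU, rfl⟩)

/-- Subbasic "lower" sets are Vietoris-open. -/
lemma low_isOpen {X : Type*} [TopologicalSpace X] {U : Set X} (hU : IsOpen U) :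
    @IsOpen (Hyper X) (vietoris X) {A : Hyper X | ((A : Set X) ∩ U).Nonempty} :=
  TopologicalSpace.GenerateOpen.basic _ (Or.inr ⟨U, hU, rfl⟩)

/-- The image under `exp f` of a canonical basic Vietoris set is open. -/
lemma image_basic_isOpen {X Y : Type*} [TopologicalSpace X] [CompactSpace X]
    [T2Space X] [TopologicalSpace Y] [CompactSpace Y] [T2Space Y]
    (f : X → Y) (hf : Continuous f) (hopen : IsOpenMap f)
    (W₀ : Set X) (hW₀ : IsOpen W₀) (𝒱 : Set (Set X)) (h𝒱fin : 𝒱.Finite)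
    (h𝒱op : ∀ V ∈ 𝒱, IsOpen V) :
    @IsOpen (Hyper Y) (vietoris Y)
      ((fun A : Hyper X => (⟨f '' (A : Set X), A.2.1.image f, A.2.2.image hf⟩ : Hyper Y)) ''
        {A : Hyper X | (A : Set X) ⊆ W₀ ∧ ∀ V ∈ 𝒱, ((A : Set X) ∩ V).Nonempty}) := by
  letI : TopologicalSpace (Hyper Y) := vietoris Y
  show IsOpen _
  rw [isOpen_iff_forall_mem_open]
  rintro B ⟨A, ⟨hAW, hAV⟩, rfl⟩
  refine ⟨{C : Hyper Y | (C : Set Y) ⊆ f '' W₀ ∧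
      ∀ V ∈ 𝒱, ((C : Set Y) ∩ f '' (V ∩ W₀)).Nonempty}, ?_, ?_, ?_, ?_⟩
  · -- this open set is contained in the image
    rintro C ⟨hCW, hCV⟩
    obtain ⟨K, hKc, hKW, hKB⟩ :=
      exists_compact_image_eq f hf hopen hW₀ C.2.2 hCW
    -- pick a witness point in each V ∩ W₀ mapping into C
    have hXne : Nonempty X := ⟨A.2.1.some⟩
    have hpt : ∀ V : Set X, ∃ x : X, V ∈ 𝒱 → (x ∈ V ∧ x ∈ W₀ ∧ f x ∈ (C : Set Y)) := by
      intro V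
      by_cases hV : V ∈ 𝒱
      · obtain ⟨y, hyC, x, ⟨hxV, hxW⟩, rfl⟩ := hCV V hV
        exact ⟨x, fun _ => ⟨hxV, hxW, hyC⟩⟩
      · exact ⟨Classical.arbitrary X, fun h => absurd h hV⟩
    choose pt hpt using hpt
    set A' : Set X := K ∪ pt '' 𝒱 with hA'
    have hA'c : IsCompact A' := hKc.union (h𝒱fin.image pt).isCompact
    have hA'ne : A'.Nonempty := by
      refine Set.Nonempty.inl ?_
      rw [← Set.image_nonempty (f := f), hKB]
      exact C.2.1
    have hA'W : A' ⊆ W₀ := by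
      rintro x (hx | ⟨V, hV, rfl⟩)
      · exact hKW hx
      · exact (hpt V hV).2.1
    have hA'img : f '' A' = (C : Set Y) := by
      rw [Set.image_union, hKB, Set.union_eq_left]
      rintro y ⟨x, ⟨V, hV, rfl⟩, rfl⟩
      exact (hpt V hV).2.2
    refine ⟨⟨A', hA'ne, hA'c⟩, ⟨hA'W, fun V hV => ⟨pt V, Or.inr ⟨V, hV, rfl⟩, (hpt V hV).1⟩⟩, ?_⟩
    exact Subtype.ext hA'img
  · -- openness
    have : {C : Hyper Y | (C : Set Y) ⊆ f '' W₀ ∧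
        ∀ V ∈ 𝒱, ((C : Set Y) ∩ f '' (V ∩ W₀)).Nonempty} =
        {C : Hyper Y | (C : Set Y) ⊆ f '' W₀} ∩
        ⋂ V ∈ 𝒱, {C : Hyper Y | ((C : Set Y) ∩ f '' (V ∩ W₀)).Nonempty} := by
      ext C; simp [Set.mem_iInter]
    rw [this]
    exact (up_isOpen (hopen _ hW₀)).inter
      (h𝒱fin.isOpen_biInter fun V hV => low_isOpen (hopen _ ((h𝒱op V hV).inter hW₀)))
  · -- first membership component
    exact Set.image_mono (f := f) hAW
  · -- second membership component
    intro V hV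
    obtain ⟨x, hxA, hxV⟩ := hAV V hV
    exact ⟨f x, ⟨x, hxA, rfl⟩, x, ⟨hxV, hAW hxA⟩, rfl⟩

/-- If `f : X → Y` is a surjective open continuous map between
compact Hausdorff spaces, then the induced map `exp(f) : exp(X) → exp(Y)`,
`A ↦ f '' A`, is open with respect to the Vietoris topologies. -/
theorem exp_map_isOpenMap
    (X Y : Type*) [TopologicalSpace X] [CompactSpace X] [T2Space X]
    [TopologicalSpace Y] [CompactSpace Y] [T2Space Y]
    (f : X → Y) (hf : Continuous f) (hsurj : Function.Surjective f)
    (hopen : IsOpenMap f) :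
    @IsOpenMap (Hyper X) (Hyper Y) (vietoris X) (vietoris Y)
      (fun A => ⟨f '' (A : Set X), A.2.1.image f, A.2.2.image hf⟩) := by
  letI : TopologicalSpace (Hyper X) := vietoris X
  letI : TopologicalSpace (Hyper Y) := vietoris Y
  show IsOpenMap (fun A : Hyper X =>
    (⟨f '' (A : Set X), A.2.1.image f, A.2.2.image hf⟩ : Hyper Y))
  have hbasis := TopologicalSpace.isTopologicalBasis_of_subbasis
    (t := vietoris X)
    (s := {S | ∃ U : Set X, IsOpen U ∧ S = {A : Hyper X | (A : Set X) ⊆ U}} ∪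
       {S | ∃ U : Set X, IsOpen U ∧ S = {A : Hyper X | ((A : Set X) ∩ U).Nonempty}}) rfl
  intro O hO
  obtain ⟨S, hSsub, rfl⟩ := hbasis.open_eq_sUnion hO
  rw [Set.image_sUnion]
  apply isOpen_sUnion
  rintro s' ⟨s, hs, rfl⟩
  obtain ⟨F, ⟨hFfin, hFsub⟩, rfl⟩ := hSsub hs
  -- extract the opens involved
  set 𝒰 : Set (Set X) := {U | IsOpen U ∧ {A : Hyper X | (A : Set X) ⊆ U} ∈ F} with h𝒰
  set 𝒱 : Set (Set X) := {V | IsOpen V ∧ {A : Hyper X | ((A : Set X) ∩ V).Nonempty} ∈ F} with h𝒱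
  have hupinj : Function.Injective (fun U : Set X => {A : Hyper X | (A : Set X) ⊆ U}) := by
    intro U V h
    ext x
    have h' := Set.ext_iff.mp h ⟨{x}, Set.singleton_nonempty x, isCompact_singleton⟩
    simpa [Set.singleton_subset_iff] using h'
  have hlowinj : Function.Injective
      (fun U : Set X => {A : Hyper X | ((A : Set X) ∩ U).Nonempty}) := by
    intro U V h
    ext x
    have h' := Set.ext_iff.mp h ⟨{x}, Set.singleton_nonempty x, isCompact_singleton⟩
    simpa [Set.singleton_inter_nonempty] using h'
  have h𝒰fin : 𝒰.Finite :=
    (hFfin.preimage hupinj.injOn).subset (fun U hU => hU.2)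
  have h𝒱fin : 𝒱.Finite :=
    (hFfin.preimage hlowinj.injOn).subset (fun V hV => hV.2)
  have hW₀ : IsOpen (⋂₀ 𝒰) := Set.Finite.isOpen_sInter h𝒰fin (fun U hU => hU.1)
  have hrw : ⋂₀ F =
      {A : Hyper X | (A : Set X) ⊆ ⋂₀ 𝒰 ∧ ∀ V ∈ 𝒱, ((A : Set X) ∩ V).Nonempty} := by
    ext A
    simp only [Set.mem_sInter, Set.mem_setOf_eq]
    constructor
    · intro h
      refine ⟨fun x hx => Set.mem_sInter.mpr fun U hU => h _ hU.2 hx,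
        fun V hV => h _ hV.2⟩
    · rintro ⟨h1, h2⟩ s hsF
      rcases hFsub hsF with ⟨U, hUo, rfl⟩ | ⟨V, hVo, rfl⟩
      · exact fun x hx => Set.mem_sInter.mp (h1 hx) U ⟨hUo, hsF⟩
      · exact h2 V ⟨hVo, hsF⟩
  change IsOpen (_ '' ⋂₀ F)
  rw [hrw]
  exact image_basic_isOpen f hf hopen _ hW₀ 𝒱 h𝒱fin (fun V hV => hV.1)
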